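/- arXiv:2208.02293 — 2 statements merged into one kernel-verified Lean document; each statement's English description precedes it below -/
import Mathlib

section
/- Let f : [0,1] → ℝ be càglàd, i.e. left-continuous at every point of (0,1] and possessing right limits at every point of [0,1). If f(0) = 0 and ∫₀¹ f(s)·sⁿ ds = 0 for every natural number n, then f(s) = 0 for every s ∈ [0,1]. -/
open MeasureTheory Filter

private lemma caglad_aux_meas (f : ℝ → ℝ)
    (hleft : ∀ t ∈ Set.Ioc (0:ℝ) 1, Tendsto f (nhdsWithin t (Set.Iio t)) (nhds (f t))) :
    AEMeasurable f (volume.restrict (Set.Icc (0:ℝ) 1)) := by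
  set μ := volume.restrict (Set.Icc (0:ℝ) 1) with hμ
  set s : ℕ → ℝ → ℝ := fun n t => (((⌈(n+1 : ℝ) * t⌉ : ℤ) : ℝ) - 1) / (n+1) with hs
  have hg : ∀ n : ℕ, Measurable (fun t : ℝ => f (s n t)) := by
    intro n
    exact (measurable_from_top (f := fun k : ℤ => f (((k : ℝ) - 1)/(n+1)))).comp
      (Int.measurable_ceil.comp (measurable_const.mul measurable_id))
  apply aemeasurable_of_tendsto_metrizable_ae atTop (fun n => (hg n).aemeasurable)
    (g := f)
  have h1 : ∀ᵐ t ∂μ, t ∈ Set.Icc (0:ℝ) 1 := ae_restrict_mem measurableSet_Icc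
  have h2 : ∀ᵐ t ∂μ, t ≠ 0 := by
    have : μ {(0:ℝ)} = 0 :=
      le_antisymm ((Measure.restrict_apply_le _ _).trans (by simp)) zero_le
    refine measure_mono_null (fun x hx => ?_) this
    simpa using hx
  filter_upwards [h1, h2] with t ht ht0
  have htIoc : t ∈ Set.Ioc (0:ℝ) 1 := ⟨lt_of_le_of_ne ht.1 (Ne.symm ht0), ht.2⟩
  have hst : Tendsto (fun n => s n t) atTop (nhdsWithin t (Set.Iio t)) := by
    have hlt : ∀ n : ℕ, s n t < t := by
      intro n
      rw [hs]
      have := Int.ceil_lt_add_one ((n+1 : ℝ) * t)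
      have hn : (0:ℝ) < n + 1 := by positivity
      rw [div_lt_iff₀ hn]
      linarith
    have hge : ∀ n : ℕ, t - 1/(n+1) ≤ s n t := by
      intro n
      rw [hs]
      have := Int.le_ceil ((n+1 : ℝ) * t)
      have hn : (0:ℝ) < n + 1 := by positivity
      rw [le_div_iff₀ hn]
      field_simp
      rw [mul_comm t]
      linarith
    apply tendsto_nhdsWithin_of_tendsto_nhds_of_eventually_within
    · apply tendsto_of_tendsto_of_tendsto_of_le_of_le
        (g := fun n : ℕ => t - 1/(n+1)) (h := fun _ : ℕ => t) ?_ tendsto_const_nhds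
        hge (fun n => (hlt n).le)
      have := tendsto_one_div_add_atTop_nhds_zero_nat (𝕜 := ℝ)
      have : Tendsto (fun n : ℕ => t - 1/(n+1)) atTop (nhds (t - 0)) :=
        tendsto_const_nhds.sub (by exact_mod_cast tendsto_one_div_add_atTop_nhds_zero_nat (𝕜 := ℝ))
      simpa using this
    · exact Eventually.of_forall fun n => hlt n
  exact (hleft t htIoc).comp hst

lemma caglad_aux_bdd (f : ℝ → ℝ)
    (hleft : ∀ t ∈ Set.Ioc (0:ℝ) 1, Tendsto f (nhdsWithin t (Set.Iio t)) (nhds (f t)))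
    (hright : ∀ t ∈ Set.Ico (0:ℝ) 1, ∃ L : ℝ, Tendsto f (nhdsWithin t (Set.Ioi t)) (nhds L)) :
    ∃ C : ℝ, 0 ≤ C ∧ ∀ t ∈ Set.Icc (0:ℝ) 1, |f t| ≤ C := by
  have key : ∀ t : ℝ, ∃ C : ℝ, t ∈ Set.Icc (0:ℝ) 1 →
      {s : ℝ | s ∈ Set.Icc (0:ℝ) 1 → |f s| ≤ C} ∈ nhds t := by
    intro t
    by_cases ht : t ∈ Set.Icc (0:ℝ) 1
    swap
    · exact ⟨0, fun h => absurd h ht⟩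
    have habs : ∀ (c : ℝ), {y : ℝ | |y| ≤ |c| + 1} ∈ nhds c := by
      intro c
      have : ∀ᶠ y in nhds c, |y - c| < 1 := by
        have := Metric.ball_mem_nhds c one_pos
        filter_upwards [this] with y hy
        simpa [Real.dist_eq] using hy
      filter_upwards [this] with y hy
      have : |y| ≤ |y - c| + |c| := by
        calc |y| = |y - c + c| := by ring_nf
        _ ≤ |y - c| + |c| := abs_add_le _ _
      show |y| ≤ |c| + 1
      linarith
    obtain ⟨a, ha, haf⟩ : ∃ a < t, ∀ s ∈ Set.Ioo a t,
        s ∈ Set.Icc (0:ℝ) 1 → |f s| ≤ |f t| + 1 := by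
      rcases eq_or_lt_of_le ht.1 with h0 | h0
      · exact ⟨t - 1, by linarith, fun s hs hs' => absurd hs.2 (not_lt.2 (h0 ▸ hs'.1))⟩
      · have hev := (hleft t ⟨h0, ht.2⟩) (habs (f t))
        obtain ⟨a, ha, hsub⟩ := mem_nhdsLT_iff_exists_Ioo_subset.1 hev
        exact ⟨a, ha, fun s hs _ => hsub hs⟩
    obtain ⟨Cr, b, hb, hbf⟩ : ∃ Cr b, t < b ∧ ∀ s ∈ Set.Ioo t b,
        s ∈ Set.Icc (0:ℝ) 1 → |f s| ≤ Cr := by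
      rcases eq_or_lt_of_le ht.2 with h1 | h1
      · exact ⟨0, t + 1, by linarith, fun s hs hs' => absurd hs'.2 (not_le.2 (h1 ▸ hs.1))⟩
      · obtain ⟨L, hL⟩ := hright t ⟨ht.1, h1⟩
        have hev := hL (habs L)
        obtain ⟨b, hb, hsub⟩ := mem_nhdsGT_iff_exists_Ioo_subset.1 hev
        exact ⟨|L| + 1, b, hb, fun s hs _ => hsub hs⟩
    refine ⟨max (|f t| + 1) (max Cr (|f t|)), fun _ => ?_⟩
    have hmem : Set.Ioo a b ∈ nhds t := Ioo_mem_nhds ha hb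
    filter_upwards [hmem] with s hs hsI
    rcases lt_trichotomy s t with h | h | h
    · exact le_trans (haf s ⟨hs.1, h⟩ hsI) (le_max_left _ _)
    · subst h
      exact le_trans (le_max_right Cr _) (le_max_right _ _)
    · exact le_trans (hbf s ⟨h, hs.2⟩ hsI) ((le_max_left _ _).trans (le_max_right _ _))
  choose C hC using key
  obtain ⟨F, hFmem, hFcov⟩ := isCompact_Icc.elim_nhds_subcover
    (fun t => {s : ℝ | s ∈ Set.Icc (0:ℝ) 1 → |f s| ≤ C t}) (fun x hx => hC x hx)
  have h0 : (0:ℝ) ∈ Set.Icc (0:ℝ) 1 := by norm_num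
  obtain ⟨x₀, hx₀F, _⟩ := Set.mem_iUnion₂.1 (hFcov h0)
  have hne : F.Nonempty := ⟨x₀, hx₀F⟩
  refine ⟨max 0 (F.sup' hne C), le_max_left _ _, fun t htI => ?_⟩
  obtain ⟨x, hxF, hx⟩ := Set.mem_iUnion₂.1 (hFcov htI)
  exact le_trans (hx htI) (le_trans (Finset.le_sup' C hxF) (le_max_right _ _))

/-- If `f : [0,1] → ℝ` is càglàd (left-continuous on `(0,1]` with right limits on `[0,1)`),
`f 0 = 0` and all moments `∫₀¹ f(s) sⁿ ds` vanish, then `f` vanishes identically on `[0,1]`. -/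
theorem caglad_annulment (f : ℝ → ℝ)
    (hleft : ∀ t ∈ Set.Ioc (0 : ℝ) 1,
      Tendsto f (nhdsWithin t (Set.Iio t)) (nhds (f t)))
    (hright : ∀ t ∈ Set.Ico (0 : ℝ) 1,
      ∃ L : ℝ, Tendsto f (nhdsWithin t (Set.Ioi t)) (nhds L))
    (h0 : f 0 = 0)
    (hmom : ∀ n : ℕ, ∫ s in Set.Icc (0 : ℝ) 1, f s * s ^ n = 0) :
    ∀ s ∈ Set.Icc (0 : ℝ) 1, f s = 0 := by
  set μ := volume.restrict (Set.Icc (0:ℝ) 1) with hμdef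
  have hmeas := caglad_aux_meas f hleft
  obtain ⟨C, hC0, hCb⟩ := caglad_aux_bdd f hleft hright
  have hμuniv : μ Set.univ = 1 := by
    rw [hμdef, Measure.restrict_apply_univ, Real.volume_Icc]
    norm_num
  haveI : IsFiniteMeasure μ := ⟨by rw [hμuniv]; exact ENNReal.one_lt_top⟩
  have haeIcc : ∀ᵐ t ∂μ, t ∈ Set.Icc (0:ℝ) 1 := ae_restrict_mem measurableSet_Icc
  -- integrability of f * g for g continuous on [0,1]
  have hint : ∀ g : ℝ → ℝ, ContinuousOn g (Set.Icc 0 1) →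
      Integrable (fun x => f x * g x) μ := by
    intro g hg
    obtain ⟨D, hD⟩ := isCompact_Icc.exists_bound_of_continuousOn hg
    refine Integrable.mono' (integrable_const (C * max D 0)) ?_ ?_
    · exact hmeas.aestronglyMeasurable.mul (hg.aestronglyMeasurable measurableSet_Icc)
    · filter_upwards [haeIcc] with x hx
      have h1 : |f x| ≤ C := hCb x hx
      have h2 : |g x| ≤ max D 0 := le_trans (hD x hx) (le_max_left _ _)
      calc ‖f x * g x‖ = |f x| * |g x| := by rw [Real.norm_eq_abs, abs_mul]
        _ ≤ C * max D 0 := mul_le_mul h1 h2 (abs_nonneg _) hC0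
  have hintf : Integrable f μ := by
    simpa using hint (fun _ => (1:ℝ)) continuousOn_const
  -- moments kill polynomials
  have hpoly : ∀ p : Polynomial ℝ, ∫ x, f x * p.eval x ∂μ = 0 := by
    intro p
    have heq : ∀ x : ℝ, f x * p.eval x
        = ∑ i ∈ Finset.range (p.natDegree + 1), p.coeff i * (f x * x ^ i) := by
      intro x
      rw [Polynomial.eval_eq_sum_range, Finset.mul_sum]
      exact Finset.sum_congr rfl fun i _ => by ring
    simp_rw [heq]
    rw [integral_finset_sum]
    · refine Finset.sum_eq_zero fun i _ => ?_
      rw [integral_const_mul]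
      rw [hmom i, mul_zero]
    · intro i _
      exact (hint (fun x => x ^ i) (continuous_pow i).continuousOn).const_mul _
  -- kill continuous functions via Weierstrass
  have hcont : ∀ g : ℝ → ℝ, ContinuousOn g (Set.Icc 0 1) →
      ∫ x, f x * g x ∂μ = 0 := by
    intro g hg
    have habs : ∀ ε > (0:ℝ), |∫ x, f x * g x ∂μ| ≤ C * ε := by
      intro ε hε
      obtain ⟨p, hp⟩ := exists_polynomial_near_of_continuousOn 0 1 g hg ε hε
      have hpc : ContinuousOn (fun x => p.eval x) (Set.Icc (0:ℝ) 1) :=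
        p.continuous_aeval.continuousOn
      have h1 : (∫ x, f x * g x ∂μ) = ∫ x, f x * (g x - p.eval x) ∂μ := by
        have : (fun x => f x * (g x - p.eval x))
            = fun x => f x * g x - f x * p.eval x := funext fun x => by ring
        rw [this, integral_sub (hint g hg) (hint _ hpc), hpoly p, sub_zero]
      rw [h1]
      have hb := norm_integral_le_of_norm_le_const (μ := μ)
        (f := fun x => f x * (g x - p.eval x)) (C := C * ε) ?_
      · rw [measureReal_def, hμuniv] at hb
        simpa using hb
      · filter_upwards [haeIcc] with x hx
        have h1' : |f x| ≤ C := hCb x hx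
        have h2' : |g x - p.eval x| ≤ ε := by
          have := hp x hx
          rw [abs_sub_comm] at this
          exact this.le
        calc ‖f x * (g x - p.eval x)‖ = |f x| * |g x - p.eval x| := by
              rw [Real.norm_eq_abs, abs_mul]
          _ ≤ C * ε := mul_le_mul h1' h2' (abs_nonneg _) hC0
    by_contra hne
    have hIpos : 0 < |∫ x, f x * g x ∂μ| := abs_pos.2 hne
    set I := |∫ x, f x * g x ∂μ|
    have hεpos : 0 < I / (2 * (C + 1)) := by positivity
    have := habs _ hεpos
    have hC1 : (0:ℝ) < C + 1 := by linarith
    have h3 : (C+1) * (I / (2*(C+1))) = I/2 := by field_simp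
    have h4 : C * (I/(2*(C+1))) ≤ (C+1) * (I/(2*(C+1))) :=
      mul_le_mul_of_nonneg_right (by linarith) hεpos.le
    linarith
  -- conclude f = 0 a.e. via smooth test functions
  have hae : ∀ᵐ x ∂μ, f x = 0 := by
    apply ae_eq_zero_of_integral_contDiff_smul_eq_zero hintf.locallyIntegrable
    intro g hgsm _hgsupp
    have : (fun x => g x • f x) = fun x => f x * g x := funext fun x => by
      simp [smul_eq_mul, mul_comm]
    rw [this]
    exact hcont g hgsm.continuous.continuousOn
  -- upgrade to everywhere using left-continuity
  intro t ht
  rcases eq_or_lt_of_le ht.1 with hz | hz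
  · rw [← hz]; exact h0
  have hfreq : ∃ᶠ s in nhdsWithin t (Set.Iio t), f s ∈ ({0} : Set ℝ) := by
    by_contra hcon
    rw [not_frequently] at hcon
    obtain ⟨a, ha, hsub⟩ := mem_nhdsLT_iff_exists_Ioo_subset.1 hcon
    have ha' : a < t := ha
    set c := max a 0 with hc
    have hct : c < t := max_lt ha' hz
    have hsub2 : Set.Ioo c t ⊆ {x | ¬ f x ∈ ({0} : Set ℝ)} := fun x hx =>
      hsub ⟨lt_of_le_of_lt (le_max_left a 0) hx.1, hx.2⟩
    have hnull : μ (Set.Ioo c t) = 0 := measure_mono_null hsub2 hae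
    have hIccsub : Set.Ioo c t ⊆ Set.Icc (0:ℝ) 1 := fun x hx =>
      ⟨le_of_lt (lt_of_le_of_lt (le_max_right a 0) hx.1), le_trans hx.2.le ht.2⟩
    rw [hμdef, Measure.restrict_apply measurableSet_Ioo,
      Set.inter_eq_self_of_subset_left hIccsub, Real.volume_Ioo] at hnull
    exact absurd hnull (by simp [hct, sub_pos.2 hct, ne_of_gt, ENNReal.ofReal_pos.2])
  have := mem_closure_of_frequently_of_tendsto hfreq (hleft t ⟨hz, ht.2⟩)
  rwa [isClosed_singleton.closure_eq, Set.mem_singleton_iff] at this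
end

section
/- Let F be a σ-finite Borel measure on ℝ with F({0}) = 0, ∫_ℝ min(1, x²) dF(x) < ∞, and ∫_ℝ |x|^k dF(x) < ∞ for all integers k ≥ 2. Let g : ℝ → ℝ be Borel measurable with ∫_ℝ (e^{g(x)} − 1)² dF(x) < ∞. Then the measure F̃ defined by F̃(dx) := e^{g(x)} F(dx) satisfies: (i) F̃({0}) = 0; (ii) ∫_ℝ min(1, x²) dF̃(x) < ∞, i.e. F̃ is a Lévy measure on ℝ; and (iii) ∫_{|x|>1} |x|^k dF̃(x) < ∞ for every natural number k. -/
open MeasureTheory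

lemma key_real (h h' t : ℝ) (h0 : 0 ≤ h) (h1 : h ≤ h') (h2 : h ^ 2 ≤ h') :
    Real.exp t * h ≤ 2 * h' + (Real.exp t - 1) ^ 2 := by
  nlinarith [sq_nonneg (h - |Real.exp t - 1|), sq_abs (Real.exp t - 1),
    le_abs_self (Real.exp t - 1), abs_nonneg (Real.exp t - 1)]

lemma key_ennreal (h h' t : ℝ) (h0 : 0 ≤ h) (h1 : h ≤ h') (h2 : h ^ 2 ≤ h') :
    ENNReal.ofReal (Real.exp t) * ENNReal.ofReal h
      ≤ 2 * ENNReal.ofReal h' + ENNReal.ofReal ((Real.exp t - 1) ^ 2) := by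
  have h'0 : 0 ≤ h' := h0.trans h1
  rw [← ENNReal.ofReal_mul (Real.exp_nonneg t)]
  calc ENNReal.ofReal (Real.exp t * h)
      ≤ ENNReal.ofReal (2 * h' + (Real.exp t - 1) ^ 2) :=
        ENNReal.ofReal_le_ofReal (key_real h h' t h0 h1 h2)
    _ = 2 * ENNReal.ofReal h' + ENNReal.ofReal ((Real.exp t - 1) ^ 2) := by
        rw [ENNReal.ofReal_add (by positivity) (sq_nonneg _),
          ENNReal.ofReal_mul (by norm_num : (0:ℝ) ≤ 2)]
        norm_num

/-- Exponential tilting of a Lévy measure: if `F` is a Lévy measure on `ℝ` with all moments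
of order `≥ 2` finite and `∫ (e^{g} − 1)² dF < ∞`, then `e^{g}·F` is again a Lévy measure
with all moments finite outside the unit ball. -/
theorem exponential_tilting_levy (F : Measure ℝ) [SigmaFinite F]
    (hF0 : F {0} = 0)
    (hF2 : ∫⁻ x, ENNReal.ofReal (min 1 (x ^ 2)) ∂F < ⊤)
    (hFk : ∀ k : ℕ, 2 ≤ k → ∫⁻ x, ENNReal.ofReal (|x| ^ k) ∂F < ⊤)
    (g : ℝ → ℝ) (hg : Measurable g)
    (hsq : ∫⁻ x, ENNReal.ofReal ((Real.exp (g x) - 1) ^ 2) ∂F < ⊤) :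
    (F.withDensity (fun x => ENNReal.ofReal (Real.exp (g x)))) {0} = 0 ∧
      (∫⁻ x, ENNReal.ofReal (min 1 (x ^ 2))
        ∂(F.withDensity fun x => ENNReal.ofReal (Real.exp (g x))) < ⊤) ∧
      (∀ k : ℕ,
        ∫⁻ x in {x : ℝ | 1 < |x|}, ENNReal.ofReal (|x| ^ k)
          ∂(F.withDensity fun x => ENNReal.ofReal (Real.exp (g x))) < ⊤) := by
  have hw : Measurable fun x => ENNReal.ofReal (Real.exp (g x)) :=
    ((Real.measurable_exp.comp hg)).ennreal_ofReal
  have hsqm : Measurable fun x : ℝ => ENNReal.ofReal ((Real.exp (g x) - 1) ^ 2) :=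
    (((Real.measurable_exp.comp hg).sub measurable_const).pow_const 2).ennreal_ofReal
  refine ⟨?_, ?_, ?_⟩
  · rw [withDensity_apply _ (measurableSet_singleton 0),
      Measure.restrict_eq_zero.mpr hF0, lintegral_zero_measure]
  · have hmin : Measurable fun x : ℝ => ENNReal.ofReal (min 1 (x ^ 2)) := by
      measurability
    rw [lintegral_withDensity_eq_lintegral_mul F hw hmin]
    calc ∫⁻ x, ((fun x => ENNReal.ofReal (Real.exp (g x))) *
            fun x : ℝ => ENNReal.ofReal (min 1 (x ^ 2))) x ∂F
        ≤ ∫⁻ x, 2 * ENNReal.ofReal (min 1 (x ^ 2))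
            + ENNReal.ofReal ((Real.exp (g x) - 1) ^ 2) ∂F := by
          refine lintegral_mono fun x => ?_
          simp only [Pi.mul_apply]
          refine key_ennreal _ _ _ ?_ le_rfl ?_
          · positivity
          · have h1 : min 1 (x ^ 2) ≤ 1 := min_le_left _ _
            have h0 : (0:ℝ) ≤ min 1 (x ^ 2) := by positivity
            nlinarith
      _ = 2 * (∫⁻ x, ENNReal.ofReal (min 1 (x ^ 2)) ∂F)
            + ∫⁻ x, ENNReal.ofReal ((Real.exp (g x) - 1) ^ 2) ∂F := by
          rw [lintegral_add_left (f := fun x => 2 * ENNReal.ofReal (min 1 (x ^ 2))) ((measurable_const.mul hmin)), lintegral_const_mul _ hmin]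
      _ < ⊤ := by
          refine ENNReal.add_lt_top.mpr ⟨?_, hsq⟩
          exact ENNReal.mul_lt_top (by norm_num) hF2
  · intro k
    set S : Set ℝ := {x | 1 < |x|} with hS
    have hSm : MeasurableSet S := (isOpen_lt continuous_const continuous_abs).measurableSet
    have hfk : Measurable fun x : ℝ => ENNReal.ofReal (|x| ^ k) :=
      (measurable_abs.pow_const k).ennreal_ofReal
    have hfm : Measurable fun x : ℝ => ENNReal.ofReal (|x| ^ (2 * k + 2)) :=
      (measurable_abs.pow_const (2 * k + 2)).ennreal_ofReal
    have hm := hFk (2 * k + 2) (by omega)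
    rw [restrict_withDensity hSm, lintegral_withDensity_eq_lintegral_mul _ hw hfk]
    calc ∫⁻ x in S, ((fun x => ENNReal.ofReal (Real.exp (g x))) *
            fun x : ℝ => ENNReal.ofReal (|x| ^ k)) x ∂F
        ≤ ∫⁻ x in S, 2 * ENNReal.ofReal (|x| ^ (2 * k + 2))
            + ENNReal.ofReal ((Real.exp (g x) - 1) ^ 2) ∂F := by
          refine setLIntegral_mono ((measurable_const.mul hfm).add hsqm) fun x hx => ?_
          simp only [Pi.mul_apply]
          have hx1 : (1:ℝ) ≤ |x| := le_of_lt hx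
          refine key_ennreal _ _ _ (by positivity) ?_ ?_
          · exact pow_le_pow_right₀ hx1 (by omega)
          · rw [← pow_mul]
            exact pow_le_pow_right₀ hx1 (by omega)
      _ ≤ ∫⁻ x, 2 * ENNReal.ofReal (|x| ^ (2 * k + 2))
            + ENNReal.ofReal ((Real.exp (g x) - 1) ^ 2) ∂F :=
          setLIntegral_le_lintegral _ _
      _ = 2 * (∫⁻ x, ENNReal.ofReal (|x| ^ (2 * k + 2)) ∂F)
            + ∫⁻ x, ENNReal.ofReal ((Real.exp (g x) - 1) ^ 2) ∂F := by
          rw [lintegral_add_left (f := fun x => 2 * ENNReal.ofReal (|x| ^ (2 * k + 2))) (measurable_const.mul hfm), lintegral_const_mul _ hfm]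
      _ < ⊤ := by
          refine ENNReal.add_lt_top.mpr ⟨?_, hsq⟩
          exact ENNReal.mul_lt_top (by norm_num) hm
end
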